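/- For each s ≥ 2, the graph A″_s = K₂ + (2K₂ ∪ K_s), the join of an edge with the disjoint union of two edges and a complete graph on s vertices, is 2-connected and contains no dominating cycle. -/

import Mathlib

open SimpleGraph

def IsCycleEmb {V : Type*} (G : SimpleGraph V) (n : ℕ) (f : ZMod n → V) : Prop :=
  3 ≤ n ∧ Function.Injective f ∧ ∀ i : ZMod n, G.Adj (f i) (f (i + 1))

def IsLongestCycle {V : Type*} (G : SimpleGraph V) (n : ℕ) (f : ZMod n → V) : Prop :=
  IsCycleEmb G n f ∧ ∀ (m : ℕ) (g : ZMod m → V), IsCycleEmb G m g → m ≤ n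

def IsDominatingCycle {V : Type*} (G : SimpleGraph V) (n : ℕ) (f : ZMod n → V) : Prop :=
  IsCycleEmb G n f ∧ ∀ a b : V, G.Adj a b → a ∈ Set.range f ∨ b ∈ Set.range f

def IsCompOutside {V : Type*} (G : SimpleGraph V) (C : Set V) (H : Set V) : Prop :=
  H.Nonempty ∧ Disjoint H C ∧ (G.induce H).Connected ∧
    ∀ a ∈ H, ∀ b : V, G.Adj a b → b ∉ C → b ∈ H

def TwoConnected {V : Type*} (G : SimpleGraph V) : Prop :=
  3 ≤ Nat.card V ∧ ∀ v : V, (G.induce ({v}ᶜ : Set V)).Connected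

def KConnected {V : Type*} (G : SimpleGraph V) (k : ℕ) : Prop :=
  k < Nat.card V ∧ ∀ S : Set V, S.ncard < k → (G.induce (Sᶜ : Set V)).Connected

def HFree {W V : Type*} (H : SimpleGraph W) (G : SimpleGraph V) : Prop :=
  ¬ Nonempty (H ↪g G)

def IsCompleteMultipartite {V : Type*} (G : SimpleGraph V) : Prop :=
  ∃ s : Setoid V, ∀ a b : V, G.Adj a b ↔ ¬ s.r a b

/-- `W = K₁ + 3K₂`: vertex 0 joined to three disjoint edges 12, 34, 56. -/
def Wgraph : SimpleGraph (Fin 7) :=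
  SimpleGraph.fromRel (fun a b =>
    a = 0 ∨ (a = 1 ∧ b = 2) ∨ (a = 3 ∧ b = 4) ∨ (a = 5 ∧ b = 6))

/-- `Z₁`, the paw: triangle 012 plus pendant edge 23. -/
def pawGraph : SimpleGraph (Fin 4) :=
  SimpleGraph.fromRel (fun a b =>
    (a = 0 ∧ b = 1) ∨ (a = 1 ∧ b = 2) ∨ (a = 0 ∧ b = 2) ∨ (a = 2 ∧ b = 3))

/-- The claw `K₁,₃`. -/
def clawGraph : SimpleGraph (Fin 4) :=
  SimpleGraph.fromRel (fun a _ => a = 0)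

/-- `K₄` minus the edge 23. -/
def K4minusGraph : SimpleGraph (Fin 4) :=
  SimpleGraph.fromRel (fun a b => ¬((a = 2 ∧ b = 3) ∨ (a = 3 ∧ b = 2)))

/-- `K₁,₃**`: spider with legs of lengths 2, 2, 1 (center 0, legs 0-1-2, 0-3-4, 0-5). -/
def spider221 : SimpleGraph (Fin 6) :=
  SimpleGraph.fromRel (fun a b =>
    (a = 0 ∧ b = 1) ∨ (a = 1 ∧ b = 2) ∨ (a = 0 ∧ b = 3) ∨ (a = 3 ∧ b = 4) ∨ (a = 0 ∧ b = 5))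

/-- The theta graph `A_s`: two vertices joined by three internally disjoint paths,
each with `s` internal vertices. -/
def thetaGraph (s : ℕ) : SimpleGraph (Fin 2 ⊕ Fin 3 × Fin s) :=
  SimpleGraph.fromRel (fun a b =>
    (∃ (j : Fin 3) (k : Fin s), a = Sum.inl 0 ∧ b = Sum.inr (j, k) ∧ (k : ℕ) = 0) ∨
    (∃ (j : Fin 3) (k : Fin s), a = Sum.inl 1 ∧ b = Sum.inr (j, k) ∧ (k : ℕ) = s - 1) ∨
    (∃ (j : Fin 3) (k l : Fin s), a = Sum.inr (j, k) ∧ b = Sum.inr (j, l) ∧ (l : ℕ) = (k : ℕ) + 1))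

/-- `A′_s = 2K₁ + sK₂`. -/
def APrime (s : ℕ) : SimpleGraph (Fin 2 ⊕ Fin s × Fin 2) :=
  SimpleGraph.fromRel (fun a b =>
    (∃ (i : Fin 2) (x : Fin s × Fin 2), a = Sum.inl i ∧ b = Sum.inr x) ∨
    (∃ j : Fin s, a = Sum.inr (j, 0) ∧ b = Sum.inr (j, 1)))

/-- `A″_s = K₂ + (2K₂ ∪ K_s)`. -/
def ADoublePrime (s : ℕ) : SimpleGraph (Fin 2 ⊕ (Fin 2 × Fin 2 ⊕ Fin s)) :=
  SimpleGraph.fromRel (fun a b =>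
    (∃ i : Fin 2, a = Sum.inl i) ∨
    (∃ j : Fin 2, a = Sum.inr (Sum.inl (j, 0)) ∧ b = Sum.inr (Sum.inl (j, 1))) ∨
    (∃ p q : Fin s, a = Sum.inr (Sum.inr p) ∧ b = Sum.inr (Sum.inr q)))

/-- `A_s⁽¹⁾`: two disjoint triangles joined by three vertex-disjoint paths with `s`
internal vertices each. -/
def AOne (s : ℕ) : SimpleGraph (Fin 2 × Fin 3 ⊕ Fin 3 × Fin s) :=
  SimpleGraph.fromRel (fun a b =>
    (∃ (t : Fin 2) (i j : Fin 3), a = Sum.inl (t, i) ∧ b = Sum.inl (t, j)) ∨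
    (∃ (j : Fin 3) (k : Fin s), a = Sum.inl (0, j) ∧ b = Sum.inr (j, k) ∧ (k : ℕ) = 0) ∨
    (∃ (j : Fin 3) (k : Fin s), a = Sum.inl (1, j) ∧ b = Sum.inr (j, k) ∧ (k : ℕ) = s - 1) ∨
    (∃ (j : Fin 3) (k l : Fin s), a = Sum.inr (j, k) ∧ b = Sum.inr (j, l) ∧ (l : ℕ) = (k : ℕ) + 1))

/-- `A_s⁽⁵⁾`: vertices `x₁, x₂` and `y_{i,j}`; edges `x₁x₂`, `y_{1,j}y_{2,j}`, `x_i y_{i,j}`. -/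
def AFive (s : ℕ) : SimpleGraph (Fin 2 ⊕ Fin 2 × Fin s) :=
  SimpleGraph.fromRel (fun a b =>
    (a = Sum.inl 0 ∧ b = Sum.inl 1) ∨
    (∃ j : Fin s, a = Sum.inr (0, j) ∧ b = Sum.inr (1, j)) ∨
    (∃ (i : Fin 2) (j : Fin s), a = Sum.inl i ∧ b = Sum.inr (i, j)))

namespace Stmt10Aux

/-- The part of a vertex: 0,1 for the two `K₂` edges, 2 for the clique, 3 for hubs. -/
def part {s : ℕ} : (Fin 2 ⊕ (Fin 2 × Fin 2 ⊕ Fin s)) → ℕ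
  | .inl _ => 3
  | .inr (.inl (j, _)) => j.val
  | .inr (.inr _) => 2

lemma part_lt {s : ℕ} (v : Fin 2 ⊕ (Fin 2 × Fin 2 ⊕ Fin s)) :
    part v = 3 ∨ part v < 3 := by
  match v with
  | .inl _ => left; rfl
  | .inr (.inl (j, x)) => right; have := j.2; simpa [part] using by omega
  | .inr (.inr p) => right; simp [part]

lemma part_eq3 {s : ℕ} {v : Fin 2 ⊕ (Fin 2 × Fin 2 ⊕ Fin s)} (h : part v = 3) :
    v = Sum.inl 0 ∨ v = Sum.inl 1 := by
  match v with
  | .inl i =>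
    fin_cases i
    · exact Or.inl rfl
    · exact Or.inr rfl
  | .inr (.inl (j, x)) => have := j.2; simp [part] at h; omega
  | .inr (.inr p) => simp [part] at h

lemma adj_part {s : ℕ} {u v : Fin 2 ⊕ (Fin 2 × Fin 2 ⊕ Fin s)}
    (h : (ADoublePrime s).Adj u v) (hu : part u ≠ 3) (hv : part v ≠ 3) :
    part u = part v := by
  rw [ADoublePrime, SimpleGraph.fromRel_adj] at h
  obtain ⟨hne, h | h⟩ := h <;>
    rcases h with ⟨i, rfl⟩ | ⟨j, rfl, rfl⟩ | ⟨p, q, rfl, rfl⟩ <;>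
    simp [part] at *

lemma adj_hub {s : ℕ} (i : Fin 2) (b : Fin 2 ⊕ (Fin 2 × Fin 2 ⊕ Fin s))
    (h : Sum.inl i ≠ b) : (ADoublePrime s).Adj (Sum.inl i) b := by
  rw [ADoublePrime, SimpleGraph.fromRel_adj]
  exact ⟨h, Or.inl (Or.inl ⟨i, rfl⟩)⟩

lemma conn_of_hub {s : ℕ} (i : Fin 2) (S : Set (Fin 2 ⊕ (Fin 2 × Fin 2 ⊕ Fin s)))
    (hS : Sum.inl i ∈ S) : ((ADoublePrime s).induce S).Connected := by
  rw [SimpleGraph.connected_iff]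
  refine ⟨?_, ⟨⟨_, hS⟩⟩⟩
  have hre : ∀ a : S, ((ADoublePrime s).induce S).Reachable ⟨Sum.inl i, hS⟩ a := by
    rintro ⟨a, ha⟩
    by_cases h : Sum.inl i = a
    · subst h; exact SimpleGraph.Reachable.refl _
    · exact SimpleGraph.Adj.reachable (by simpa using adj_hub i a h)
  exact fun a b => (hre a).symm.trans (hre b)

lemma exit {s n : ℕ} (hn : 3 ≤ n) (f : ZMod n → (Fin 2 ⊕ (Fin 2 × Fin 2 ⊕ Fin s)))
    (hinj : Function.Injective f)
    (hadj : ∀ i : ZMod n, (ADoublePrime s).Adj (f i) (f (i + 1)))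
    {k : ℕ} (hk : k ≠ 3) {j j' : ZMod n} (hj : part (f j) = k) (hj' : part (f j') ≠ k) :
    ∃ i : ZMod n, part (f i) = k ∧ part (f (i + 1)) = 3 := by
  haveI : NeZero n := ⟨by omega⟩
  classical
  have hT : ∃ t : ℕ, part (f (j + (t : ZMod n))) ≠ k := by
    refine ⟨(j' - j).val, ?_⟩
    have : j + (((j' - j).val : ℕ) : ZMod n) = j' := by
      rw [ZMod.natCast_val, ZMod.cast_id]; ring
    rwa [this]
  set t := Nat.find hT with ht_def
  have ht : part (f (j + (t : ZMod n))) ≠ k := Nat.find_spec hT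
  have ht0 : t ≠ 0 := by
    intro h0
    rw [h0] at ht
    simp only [Nat.cast_zero, add_zero] at ht
    exact ht hj
  have hmin : part (f (j + ((t - 1 : ℕ) : ZMod n))) = k := by
    by_contra hc
    exact Nat.find_min hT (show t - 1 < t by omega) hc
  refine ⟨j + ((t - 1 : ℕ) : ZMod n), hmin, ?_⟩
  have hcast : (j + ((t - 1 : ℕ) : ZMod n)) + 1 = j + (t : ZMod n) := by
    have : ((t - 1 : ℕ) : ZMod n) + 1 = (t : ZMod n) := by
      rw [show t = (t - 1) + 1 by omega]; push_cast; ring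
    rw [add_assoc, this]
  rw [hcast]
  by_contra hc
  have := adj_part (hadj (j + ((t - 1 : ℕ) : ZMod n))) (by rw [hmin]; exact hk)
    (by rwa [hcast])
  rw [hmin, hcast] at this
  exact ht this.symm

end Stmt10Aux

open Stmt10Aux in
/-- For `s ≥ 2`, the graph `A″_s = K₂ + (2K₂ ∪ K_s)` is 2-connected and has no
dominating cycle. -/
theorem stmt10 (s : ℕ) (hs : 2 ≤ s) :
    TwoConnected (ADoublePrime s) ∧
      ¬ ∃ (n : ℕ) (f : ZMod n → (Fin 2 ⊕ (Fin 2 × Fin 2 ⊕ Fin s))),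
        IsDominatingCycle (ADoublePrime s) n f := by
  constructor
  · constructor
    · simp [Nat.card_eq_fintype_card]
      omega
    · intro v
      by_cases h0 : v = Sum.inl 0
      · exact conn_of_hub 1 _ (by simp [h0])
      · exact conn_of_hub 0 _ (by simp; exact fun h => h0 h.symm)
  · rintro ⟨n, f, ⟨⟨hn3, hinj, hadj⟩, hdom⟩⟩
    haveI : NeZero n := ⟨by omega⟩
    -- the three parts each contain an edge
    have e0 : (ADoublePrime s).Adj (.inr (.inl (0, 0))) (.inr (.inl (0, 1))) := by
      rw [ADoublePrime, SimpleGraph.fromRel_adj]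
      refine ⟨by simp [Prod.ext_iff], Or.inl (Or.inr (Or.inl ⟨0, rfl, rfl⟩))⟩
    have e1 : (ADoublePrime s).Adj (.inr (.inl (1, 0))) (.inr (.inl (1, 1))) := by
      rw [ADoublePrime, SimpleGraph.fromRel_adj]
      refine ⟨by simp [Prod.ext_iff], Or.inl (Or.inr (Or.inl ⟨1, rfl, rfl⟩))⟩
    have e2 : (ADoublePrime s).Adj (.inr (.inr ⟨0, by omega⟩)) (.inr (.inr ⟨1, by omega⟩)) := by
      rw [ADoublePrime, SimpleGraph.fromRel_adj]
      refine ⟨by simp [Fin.ext_iff], Or.inl (Or.inr (Or.inr ⟨⟨0, by omega⟩, ⟨1, by omega⟩, rfl, rfl⟩))⟩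
    -- hence the cycle visits all three parts
    have hv0 : ∃ j : ZMod n, part (f j) = 0 := by
      rcases hdom _ _ e0 with ⟨j, hj⟩ | ⟨j, hj⟩ <;> exact ⟨j, by rw [hj]; rfl⟩
    have hv1 : ∃ j : ZMod n, part (f j) = 1 := by
      rcases hdom _ _ e1 with ⟨j, hj⟩ | ⟨j, hj⟩ <;> exact ⟨j, by rw [hj]; rfl⟩
    have hv2 : ∃ j : ZMod n, part (f j) = 2 := by
      rcases hdom _ _ e2 with ⟨j, hj⟩ | ⟨j, hj⟩ <;> exact ⟨j, by rw [hj]; rfl⟩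
    obtain ⟨j0, hj0⟩ := hv0
    obtain ⟨j1, hj1⟩ := hv1
    obtain ⟨j2, hj2⟩ := hv2
    obtain ⟨i0, h0, g0⟩ := exit hn3 f hinj hadj (by omega) hj0 (show part (f j1) ≠ 0 by omega)
    obtain ⟨i1, h1, g1⟩ := exit hn3 f hinj hadj (by omega) hj1 (show part (f j0) ≠ 1 by omega)
    obtain ⟨i2, h2, g2⟩ := exit hn3 f hinj hadj (by omega) hj2 (show part (f j0) ≠ 2 by omega)
    have key : ∀ a b : ZMod n, f (a + 1) = f (b + 1) → a = b :=
      fun a b h => by have := hinj h; exact add_right_cancel this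
    have d01 : i0 ≠ i1 := fun h => by rw [h, h1] at h0; omega
    have d02 : i0 ≠ i2 := fun h => by rw [h, h2] at h0; omega
    have d12 : i1 ≠ i2 := fun h => by rw [h, h2] at h1; omega
    rcases part_eq3 g0 with a0 | a0 <;> rcases part_eq3 g1 with a1 | a1 <;>
      rcases part_eq3 g2 with a2 | a2 <;>
      first
        | exact d01 (key _ _ (a0.trans a1.symm))
        | exact d02 (key _ _ (a0.trans a2.symm))
        | exact d12 (key _ _ (a1.trans a2.symm))
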